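/- Let q = p^r with p > 3 prime, and let k = 2 with q ≡ 1 (mod 2). For any multiplicative character ψ of F_q and χ ranging over characters with χ^2 = ε, the Davenport–Hasse relation gives G(ψ)·G(φψ) = G(ψ^2)·ψ(4^{-1})·G(φ)·G(ε)·(−1), i.e., G(φψ) = G(φ)·G(ψ^2)·ψ(4^{−1})/G(ψ) whenever G(ψ) ≠ 0; in particular, for T a generator and any m, G_{−m + (q−1)/2} = G_{(q−1)/2}·G_{−2m}·T^m(4)/G_{−m}. -/

import Mathlib

open Finset

private lemma mulChar_eq_one_of_gen {F : Type} [Field F] [Fintype F]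
    {C : Type*} [CommMonoidWithZero C] {χ : MulChar F C}
    {g : Fˣ} (hg : ∀ x : Fˣ, x ∈ Subgroup.zpowers g) (h : χ (g : F) = 1) : χ = 1 := by
  apply MulChar.ext
  intro a
  obtain ⟨n, hn⟩ := (Submonoid.mem_powers_iff _ _).mp
    ((mem_powers_iff_mem_zpowers).mpr (hg a))
  rw [MulChar.one_apply_coe, ← hn]
  push_cast
  rw [map_pow, h, one_pow]

private lemma sq_char_eq_quadratic {F : Type} [Field F] [Fintype F] [DecidableEq F]
    (hF2 : ringChar F ≠ 2) {ψ : MulChar F ℂ} (hψ1 : ψ ≠ 1) (hψ2 : ψ ^ 2 = 1) :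
    ψ = (quadraticChar F).ringHomComp (Int.castRingHom ℂ) := by
  obtain ⟨g, hg⟩ := IsCyclic.exists_generator (α := Fˣ)
  have hsq : ψ ((g : Fˣ) : F) ^ 2 = 1 := by
    rw [← MulChar.pow_apply' ψ two_ne_zero, hψ2, MulChar.one_apply_coe]
  have hψg : ψ ((g : Fˣ) : F) = -1 := by
    rcases sq_eq_one_iff.mp hsq with h | h
    · exact absurd (mulChar_eq_one_of_gen hg h) hψ1
    · exact h
  have hqg : quadraticChar F ((g : Fˣ) : F) = -1 := by
    rcases sq_eq_one_iff.mp (quadraticChar_sq_one g.ne_zero) with h | h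
    · exact absurd (mulChar_eq_one_of_gen hg h) (quadraticChar_ne_one hF2)
    · exact h
  apply MulChar.ext
  intro a
  obtain ⟨n, hn⟩ := (Submonoid.mem_powers_iff _ _).mp
    ((mem_powers_iff_mem_zpowers).mpr (hg a))
  rw [← hn]
  push_cast
  rw [map_pow, hψg, MulChar.ringHomComp_apply, map_pow, hqg]
  simp

/-- The `k = 2` case of the Davenport–Hasse relation for Gauss sums `Gs χ = G(χ)` over
`F_q` (with `θ(α) = ζ_p^{tr α}` and `φ` the quadratic character):
`G(ψ) G(φψ) = G(ψ^2) ψ(4⁻¹) G(φ) G(ε) (-1)`, hence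
`G(φψ) = G(φ) G(ψ^2) ψ(4⁻¹) / G(ψ)` when `G(ψ) ≠ 0`; in particular, for a generator `T`
of the character group and any `m`,
`G_{-m+(q-1)/2} = G_{(q-1)/2} G_{-2m} T^m(4) / G_{-m}`. -/
theorem stmt19 (p r : ℕ) (hp : p.Prime) (hp3 : 3 < p) (hr : 0 < r)
    (F : Type) [Field F] [Fintype F] [DecidableEq F] [Algebra (ZMod p) F]
    (hcard : Fintype.card F = p ^ r)
    (ζ : ℂ) (hζ : IsPrimitiveRoot ζ p)
    (Gs : MulChar F ℂ → ℂ)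
    (hGs : ∀ χ : MulChar F ℂ,
      Gs χ = ∑ x : F, χ x * ζ ^ (Algebra.trace (ZMod p) F x).val)
    (φC : MulChar F ℂ) (hφ : φC = (quadraticChar F).ringHomComp (Int.castRingHom ℂ)) :
    (∀ ψ : MulChar F ℂ,
        Gs ψ * Gs (φC * ψ) = Gs (ψ ^ 2) * ψ (4⁻¹ : F) * Gs φC * Gs 1 * (-1)) ∧
      (∀ ψ : MulChar F ℂ, Gs ψ ≠ 0 →
        Gs (φC * ψ) = Gs φC * Gs (ψ ^ 2) * ψ (4⁻¹ : F) / Gs ψ) ∧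
      ∀ T : MulChar F ℂ, (∀ χ : MulChar F ℂ, ∃ n : ℕ, χ = T ^ n) → ∀ m : ℤ,
        Gs (T ^ (-m + ((Fintype.card F : ℤ) - 1) / 2)) =
          Gs (T ^ (((Fintype.card F : ℤ) - 1) / 2)) * Gs (T ^ (-2 * m)) * (T ^ m) 4 /
            Gs (T ^ (-m)) := by
  haveI : Fact p.Prime := ⟨hp⟩
  haveI : NeZero p := ⟨hp.pos.ne'⟩
  haveI : CharP F p :=
    charP_of_injective_ringHom (algebraMap (ZMod p) F).injective p
  have hrc : ringChar F = p := ringChar.eq F p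
  have hF2 : ringChar F ≠ 2 := by rw [hrc]; omega
  have h2 : (2 : F) ≠ 0 := by
    have : ((2 : ℕ) : F) ≠ 0 := by
      rw [Ne, CharP.cast_eq_zero_iff F p]
      intro hd
      exact absurd (Nat.le_of_dvd (by norm_num) hd) (by omega)
    simpa using this
  have h4 : (4 : F) ≠ 0 := by
    have : (4 : F) = 2 * 2 := by norm_num
    rw [this]
    exact mul_ne_zero h2 h2
  -- the additive character
  set θ : AddChar F ℂ :=
    (AddChar.zmodChar p hζ.pow_eq_one).compAddMonoidHom
      (Algebra.trace (ZMod p) F).toAddMonoidHom with hθdef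
  have hθapp : ∀ x : F, θ x = ζ ^ (Algebra.trace (ZMod p) F x).val := by
    intro x
    rw [hθdef, AddChar.compAddMonoidHom_apply, AddChar.zmodChar_apply]
    rfl
  have hGθ : ∀ χ : MulChar F ℂ, Gs χ = gaussSum χ θ := by
    intro χ
    rw [hGs, gaussSum]
    exact Finset.sum_congr rfl fun x _ => by rw [hθapp]
  -- θ is nontrivial, hence primitive
  have hθ1 : θ ≠ 1 := by
    have hnd := traceForm_nondegenerate (ZMod p) F
    have hex : ∃ b : F, Algebra.trace (ZMod p) F b ≠ 0 := by
      by_contra hf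
      push_neg at hf
      refine one_ne_zero (hnd.1 1 fun b => ?_)
      rw [Algebra.traceForm_apply, one_mul]
      exact hf b
    obtain ⟨b, hb⟩ := hex
    intro h
    have hv : θ b = 1 := by rw [h, AddChar.one_apply]
    rw [hθapp] at hv
    have hval : (Algebra.trace (ZMod p) F b).val ≠ 0 := by
      simpa [ZMod.val_eq_zero] using hb
    exact hζ.pow_ne_one_of_pos_of_lt hval
      (ZMod.val_lt _) hv
  have hprim : θ.IsPrimitive := AddChar.IsPrimitive.of_ne_one hθ1
  have hcard0 : (Fintype.card F : ℂ) ≠ 0 := by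
    exact_mod_cast Nat.cast_ne_zero.mpr Fintype.card_ne_zero
  -- G(1) = -1
  have hGs1 : Gs 1 = -1 := by
    rw [hGθ, gaussSum, ← Finset.add_sum_erase _ _ (mem_univ (0 : F)),
      MulChar.map_zero, zero_mul, zero_add,
      Finset.sum_congr rfl (fun x hx => by
        rw [MulChar.one_apply (isUnit_iff_ne_zero.mpr (Finset.ne_of_mem_erase hx)), one_mul]),
      Finset.sum_erase_eq_sub (mem_univ (0 : F)),
      AddChar.sum_eq_zero_of_ne_one hθ1, AddChar.map_zero_eq_one, zero_sub]
  -- facts about φC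
  have hφ2 : φC * φC = 1 := by
    rw [← sq, hφ]
    exact ((quadraticChar_isQuadratic F).comp _).sq_eq_one
  have hφ4 : φC ((4 : F)⁻¹) = 1 := by
    have h42 : (4 : F)⁻¹ = (2⁻¹) ^ 2 := by
      rw [show (4 : F) = 2 ^ 2 by norm_num, inv_pow]
    rw [hφ, h42, MulChar.ringHomComp_apply, quadraticChar_sq_one' (inv_ne_zero h2)]
    simp
  have hφ1 : φC ≠ 1 := by
    obtain ⟨a, ha⟩ := quadraticChar_exists_neg_one hF2
    intro h
    have ha0 : a ≠ 0 := by
      intro h0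
      rw [h0, MulChar.map_zero] at ha
      norm_num at ha
    have : φC a = -1 := by rw [hφ, MulChar.ringHomComp_apply, ha]; simp
    rw [h, MulChar.one_apply (isUnit_iff_ne_zero.mpr ha0)] at this
    norm_num at this
  -- the Jacobi sum identity J(ψ,ψ) = ψ(4⁻¹) J(φ,ψ)
  have hB : ∀ ψ : MulChar F ℂ, ψ ≠ 1 →
      jacobiSum ψ ψ = ψ ((4 : F)⁻¹) * jacobiSum φC ψ := by
    intro ψ hψ
    have step1 : jacobiSum ψ ψ = ψ ((4 : F)⁻¹) * ∑ t : F, ψ (1 - t * t) := by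
      rw [jacobiSum, ← Equiv.sum_comp
        ((Equiv.addLeft (1 : F)).trans (Equiv.mulLeft₀ (2⁻¹ : F) (inv_ne_zero h2)))
        (fun x => ψ x * ψ (1 - x)), Finset.mul_sum]
      refine Finset.sum_congr rfl fun t _ => ?_
      simp only [Equiv.trans_apply, Equiv.coe_addLeft, Equiv.mulLeft₀_apply]
      rw [← map_mul, ← map_mul]
      congr 1
      field_simp
      ring
    have count : ∀ u : F, (((univ.filter (fun t : F => t ^ 2 = u)).card : ℤ) : ℂ)
        = φC u + 1 := by
      intro u
      have hq := quadraticChar_card_sqrts hF2 u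
      have hset : {x : F | x ^ 2 = u}.toFinset = univ.filter (fun t : F => t ^ 2 = u) := by
        ext x; simp
      rw [hset] at hq
      rw [hq, hφ, MulChar.ringHomComp_apply]
      simp only [eq_intCast]
      push_cast
      ring
    have step2 : ∑ t : F, ψ (1 - t * t) = ∑ u : F, (φC u + 1) * ψ (1 - u) := by
      rw [← Finset.sum_fiberwise_of_maps_to (t := univ) (g := fun t : F => t ^ 2)
        (fun x _ => mem_univ (x ^ 2)) (fun t => ψ (1 - t * t))]
      refine Finset.sum_congr rfl fun u _ => ?_
      have hinner : ∑ t ∈ univ.filter (fun t : F => t ^ 2 = u), ψ (1 - t * t)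
          = ∑ _t ∈ univ.filter (fun t : F => t ^ 2 = u), ψ (1 - u) := by
        refine Finset.sum_congr rfl fun t ht => ?_
        rw [show t * t = u by rw [← sq]; exact (Finset.mem_filter.mp ht).2]
      rw [hinner, Finset.sum_const, nsmul_eq_mul, ← count u]
      norm_cast
    have step3 : ∑ u : F, (φC u + 1) * ψ (1 - u) = jacobiSum φC ψ := by
      simp_rw [add_mul, one_mul]
      rw [Finset.sum_add_distrib, ← jacobiSum]
      have : ∑ u : F, ψ (1 - u) = ∑ v : F, ψ v :=
        Equiv.sum_comp (Equiv.subLeft (1 : F)) ψ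
      rw [this, MulChar.sum_eq_zero_of_ne_one hψ, add_zero]
    rw [step1, step2, step3]
  -- the key identity
  have key : ∀ ψ : MulChar F ℂ, gaussSum ψ θ * gaussSum (φC * ψ) θ
      = gaussSum (ψ ^ 2) θ * ψ ((4 : F)⁻¹) * gaussSum φC θ := by
    intro ψ
    by_cases hψ1 : ψ = 1
    · subst hψ1
      rw [mul_one, one_pow, MulChar.one_apply (isUnit_iff_ne_zero.mpr (inv_ne_zero h4))]
      ring
    by_cases hψφ : ψ = φC
    · subst hψφ
      rw [hφ2, sq, hφ2, hφ4]
      ring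
    have hψφC : φC * ψ ≠ 1 := by
      intro h
      apply hψφ
      calc ψ = (φC * φC) * ψ := by rw [hφ2, one_mul]
        _ = φC * (φC * ψ) := by rw [mul_assoc]
        _ = φC := by rw [h, mul_one]
    have hψsq : ψ * ψ ≠ 1 := by
      intro h
      exact hψφ (by rw [hφ]; exact sq_char_eq_quadratic hF2 hψ1 (by rwa [sq]))
    have hGψ : gaussSum ψ θ ≠ 0 := gaussSum_ne_zero_of_nontrivial hcard0 hψ1 hprim
    have hJ1 := jacobiSum_mul_nontrivial hψsq θ
    have hJ2 := jacobiSum_mul_nontrivial hψφC θ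
    have hBψ := hB ψ hψ1
    refine mul_left_cancel₀ hGψ ?_
    rw [sq]
    linear_combination (-(gaussSum (φC * ψ) θ)) * hJ1
      + (gaussSum (ψ * ψ) θ * ψ ((4 : F)⁻¹)) * hJ2
      + (gaussSum (φC * ψ) θ * gaussSum (ψ * ψ) θ) * hBψ
  -- first part
  have part1 : ∀ ψ : MulChar F ℂ,
      Gs ψ * Gs (φC * ψ) = Gs (ψ ^ 2) * ψ (4⁻¹ : F) * Gs φC * Gs 1 * (-1) := by
    intro ψ
    rw [hGs1]
    simp only [hGθ]
    rw [key ψ]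
    ring
  have part2 : ∀ ψ : MulChar F ℂ, Gs ψ ≠ 0 →
      Gs (φC * ψ) = Gs φC * Gs (ψ ^ 2) * ψ (4⁻¹ : F) / Gs ψ := by
    intro ψ hψ0
    have h1 := part1 ψ
    rw [hGs1] at h1
    rw [eq_div_iff hψ0]
    linear_combination h1
  refine ⟨part1, part2, ?_⟩
  -- third part
  intro T hT m
  have h5q : 5 ≤ Fintype.card F := by
    rw [hcard]
    have hp4 : p ≠ 4 := by intro h; rw [h] at hp; norm_num at hp
    calc 5 ≤ p := by omega
      _ = p ^ 1 := (pow_one p).symm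
      _ ≤ p ^ r := Nat.pow_le_pow_right (by omega) hr
  have hodd : Odd (Fintype.card F) := by
    rw [hcard]
    exact (hp.odd_of_ne_two (by omega)).pow
  have hdvd : (2 : ℤ) ∣ (Fintype.card F : ℤ) - 1 := by
    obtain ⟨k, hk⟩ := hodd
    exact ⟨k, by push_cast [hk]; ring⟩
  set e : ℤ := ((Fintype.card F : ℤ) - 1) / 2 with he
  have h2e : 2 * e = (Fintype.card F : ℤ) - 1 := Int.mul_ediv_cancel' hdvd
  have hpow : ∀ χ : MulChar F ℂ, χ ^ (Fintype.card F - 1) = 1 := by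
    intro χ
    apply MulChar.ext
    intro a
    rw [MulChar.pow_apply' _ (by omega), MulChar.one_apply_coe, ← map_pow,
      FiniteField.pow_card_sub_one_eq_one (a : F) a.ne_zero, map_one]
  have hzpow : T ^ ((Fintype.card F : ℤ) - 1) = 1 := by
    have hc : ((Fintype.card F - 1 : ℕ) : ℤ) = (Fintype.card F : ℤ) - 1 := by
      push_cast [Nat.cast_sub (by omega : 1 ≤ Fintype.card F)]
      ring
    rw [← hc, zpow_natCast, hpow]
  have hTe2 : (T ^ e) ^ 2 = 1 := by
    have : (T ^ e) ^ 2 = T ^ (e * 2) := by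
      rw [← zpow_natCast (T ^ e) 2, ← zpow_mul]
      norm_num
    rw [this, show e * 2 = 2 * e by ring, h2e, hzpow]
  have hTene : T ^ e ≠ 1 := by
    intro h1
    set e' : ℕ := (Fintype.card F - 1) / 2 with he'
    have hee' : e = (e' : ℤ) := by
      rw [he, he']
      push_cast [Int.natCast_ediv, Nat.cast_sub (by omega : 1 ≤ Fintype.card F)]
      norm_num
    have hTe' : T ^ e' = 1 := by
      rw [← zpow_natCast T e', ← hee', h1]
    have he'pos : 0 < e' := by rw [he']; omega
    have hsurj : Function.Surjective (fun k : Fin e' => T ^ (k : ℕ)) := by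
      intro χ
      obtain ⟨n, rfl⟩ := hT χ
      exact ⟨⟨n % e', Nat.mod_lt _ he'pos⟩, (pow_eq_pow_mod n hTe').symm⟩
    have hle : Nat.card (MulChar F ℂ) ≤ e' := by
      have := Nat.card_le_card_of_surjective _ hsurj
      simpa using this
    rw [MulChar.card_eq_card_units_of_hasEnoughRootsOfUnity F ℂ] at hle
    have hcu : Nat.card Fˣ = Fintype.card F - 1 := by
      rw [Nat.card_eq_fintype_card, Fintype.card_units]
    rw [hcu, he'] at hle
    omega
  have hTeφ : T ^ e = φC := by
    rw [hφ]
    exact sq_char_eq_quadratic hF2 hTene hTe2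
  have hsplit : T ^ (-m + e) = φC * (T ^ (-m)) := by
    rw [zpow_add, hTeφ, mul_comm]
  have hsq2 : (T ^ (-m)) ^ 2 = T ^ (-2 * m) := by
    rw [← zpow_natCast (T ^ (-m)) 2, ← zpow_mul]
    congr 1
    push_cast
    ring
  have h4val : (T ^ (-m)) ((4 : F)⁻¹) = (T ^ m) (4 : F) := by
    rw [zpow_neg, MulChar.inv_apply_eq_inv']
    refine inv_eq_of_mul_eq_one_left ?_
    rw [← map_mul, mul_inv_cancel₀ h4, map_one]
  have hψ0 : Gs (T ^ (-m)) ≠ 0 := by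
    by_cases h1 : T ^ (-m) = 1
    · rw [h1, hGs1]; norm_num
    · rw [hGθ]
      exact gaussSum_ne_zero_of_nontrivial hcard0 h1 hprim
  rw [hsplit, part2 (T ^ (-m)) hψ0, hsq2, h4val, hTeφ]
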